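/- Let ξ > 0 and w, z ∈ (−1,1). Set a₁ = (ξ, z+w) ∈ ℝ² and, for v ∈ ℝ, a₂(v) = (vξ, v(z+w) + ξ⁻¹) ∈ ℝ², and let R = (0,ξ) × (z−1, z+1) ⊂ ℝ². Then the Lebesgue measure of the set {v ∈ (0,1) : (ℤa₁ + ℤa₂(v)) ∩ R = ∅} equals (π²/6)·Φ₀(ξ,w,z). -/

import Mathlib

open Real Set MeasureTheory

noncomputable def Υ (x : ℝ) : ℝ := if x ≤ 0 then 0 else if x < 1 then x else 1

noncomputable def Φ₀ (ξ w z : ℝ) : ℝ :=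
  if w + z ≠ 0 then (6 / π ^ 2) * Υ (1 + (ξ⁻¹ - max |w| |z| - 1) / |w + z|)
  else if ξ⁻¹ < 1 + |w| then 0 else 6 / π ^ 2

set_option maxHeartbeats 1000000 in
/-- The Lebesgue measure of the set of `v ∈ (0,1)` for which the lattice
`ℤa₁ + ℤa₂(v)` avoids the rectangle `R = (0,ξ) × (z−1, z+1)` equals
`(π²/6)·Φ₀(ξ,w,z)`. -/
theorem stmt3 (ξ w z : ℝ) (hξ : 0 < ξ) (hw : w ∈ Ioo (-1 : ℝ) 1)
    (hz : z ∈ Ioo (-1 : ℝ) 1)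
    (a₁ : ℝ × ℝ) (a₂ : ℝ → ℝ × ℝ) (ha₁ : a₁ = (ξ, z + w))
    (ha₂ : ∀ v : ℝ, a₂ v = (v * ξ, v * (z + w) + ξ⁻¹))
    (R : Set (ℝ × ℝ)) (hR : R = Ioo 0 ξ ×ˢ Ioo (z - 1) (z + 1)) :
    volume {v ∈ Ioo (0 : ℝ) 1 | ∀ ℓ₁ ℓ₂ : ℤ, ℓ₁ • a₁ + ℓ₂ • a₂ v ∉ R} =
      ENNReal.ofReal (π ^ 2 / 6 * Φ₀ ξ w z) := by
  obtain ⟨hw1, hw2⟩ := hw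
  obtain ⟨hz1, hz2⟩ := hz
  have hc : 0 < ξ⁻¹ := inv_pos.mpr hξ
  -- membership characterization
  have hpt : ∀ (v : ℝ) (ℓ₁ ℓ₂ : ℤ), ℓ₁ • a₁ + ℓ₂ • a₂ v ∈ R ↔
      (0 < (ℓ₁ : ℝ) + ℓ₂ * v ∧ (ℓ₁ : ℝ) + ℓ₂ * v < 1 ∧
        z - 1 < ((ℓ₁ : ℝ) + ℓ₂ * v) * (z + w) + ℓ₂ * ξ⁻¹ ∧
        ((ℓ₁ : ℝ) + ℓ₂ * v) * (z + w) + ℓ₂ * ξ⁻¹ < z + 1) := by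
    intro v ℓ₁ ℓ₂
    rw [ha₁, ha₂, hR]
    simp only [Prod.smul_mk, zsmul_eq_mul, Prod.mk_add_mk, mem_prod, mem_Ioo]
    constructor
    · rintro ⟨⟨hx1, hx2⟩, hy1, hy2⟩
      have hx1' : (0 : ℝ) * ξ < ((ℓ₁ : ℝ) + ℓ₂ * v) * ξ := by nlinarith [hx1]
      have hx2' : ((ℓ₁ : ℝ) + ℓ₂ * v) * ξ < 1 * ξ := by nlinarith [hx2]
      exact ⟨(mul_lt_mul_iff_of_pos_right hξ).mp hx1', (mul_lt_mul_iff_of_pos_right hξ).mp hx2',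
        by nlinarith [hy1], by nlinarith [hy2]⟩
    · rintro ⟨h1, h2, h3, h4⟩
      have hh1 := (mul_lt_mul_iff_of_pos_right hξ).mpr h1
      have hh2 := (mul_lt_mul_iff_of_pos_right hξ).mpr h2
      exact ⟨⟨by nlinarith [hh1], by nlinarith [hh2]⟩, by nlinarith [h3], by nlinarith [h4]⟩
  -- the key characterization of good v
  have key : ∀ v ∈ Ioo (0 : ℝ) 1,
      ((∀ ℓ₁ ℓ₂ : ℤ, ℓ₁ • a₁ + ℓ₂ • a₂ v ∉ R) ↔ max w z + 1 - ξ⁻¹ ≤ v * (z + w)) := by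
    intro v hv
    obtain ⟨hv0, hv1⟩ := hv
    constructor
    · intro h
      have h1 := h 0 1
      rw [hpt v 0 1] at h1
      push_cast at h1
      have h2 := h 1 (-1)
      rw [hpt v 1 (-1)] at h2
      push_cast at h2
      simp only [not_and, not_lt] at h1 h2
      have e1 : z + 1 ≤ ((0 : ℝ) + 1 * v) * (z + w) + 1 * ξ⁻¹ := by
        apply h1 (by linarith) (by linarith)
        nlinarith [mul_pos (show (0:ℝ) < 1 - v by linarith) (show (0:ℝ) < 1 - z by linarith),
          mul_pos hv0 (show (0:ℝ) < 1 + w by linarith)]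
      have hBlt : ((1 : ℝ) + (-1) * v) * (z + w) + (-1) * ξ⁻¹ < z + 1 := by
        nlinarith [mul_pos (show (0:ℝ) < 1 - w by linarith) (show (0:ℝ) < 1 - v by linarith),
          mul_pos hv0 (show (0:ℝ) < 1 + z by linarith)]
      have e2 : ((1 : ℝ) + (-1) * v) * (z + w) + (-1) * ξ⁻¹ ≤ z - 1 := by
        by_contra hcon
        push_neg at hcon
        exact absurd (h2 (by linarith) (by linarith) hcon) (not_le.mpr hBlt)
      have hKz : z + 1 - ξ⁻¹ ≤ v * (z + w) := by nlinarith [e1]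
      have hKw : w + 1 - ξ⁻¹ ≤ v * (z + w) := by nlinarith [e2]
      rcases max_cases w z with ⟨hm, _⟩ | ⟨hm, _⟩ <;> rw [hm] <;> linarith
    · intro hK ℓ₁ ℓ₂ hmem
      rw [hpt v ℓ₁ ℓ₂] at hmem
      obtain ⟨ht0, ht1, hy1, hy2⟩ := hmem
      have hP : ((ℓ₁ : ℝ) + ℓ₂ ≤ 0) ∨ (1 ≤ (ℓ₁ : ℝ) + ℓ₂) := by
        rcases le_or_gt (ℓ₁ + ℓ₂) 0 with h | h
        · left; exact_mod_cast h
        · right; exact_mod_cast (by omega : (1 : ℤ) ≤ ℓ₁ + ℓ₂)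
      have hQ : ((ℓ₁ : ℝ) ≤ 0) ∨ (1 ≤ (ℓ₁ : ℝ)) := by
        rcases le_or_gt ℓ₁ 0 with h | h
        · left; exact_mod_cast h
        · right; exact_mod_cast (by omega : (1 : ℤ) ≤ ℓ₁)
      have hA : max w z + 1 ≤ v * (z + w) + ξ⁻¹ := by linarith
      have hAz : z + 1 ≤ v * (z + w) + ξ⁻¹ := by
        have := le_max_right w z; linarith
      have hA0 : 0 ≤ v * (z + w) + ξ⁻¹ := by linarith
      have hB : (1 - v) * (z + w) - ξ⁻¹ ≤ min w z - 1 := by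
        nlinarith [max_add_min w z]
      have hBz : (1 - v) * (z + w) - ξ⁻¹ ≤ z - 1 := by
        have := min_le_right w z; linarith
      have hB0 : (1 - v) * (z + w) - ξ⁻¹ ≤ 0 := by
        have := min_le_right w z; linarith
      have hid : ((ℓ₁ : ℝ) + ℓ₂ * v) * (z + w) + ℓ₂ * ξ⁻¹ =
          ((ℓ₁ : ℝ) + ℓ₂) * (v * (z + w) + ξ⁻¹) + (ℓ₁ : ℝ) * ((1 - v) * (z + w) - ξ⁻¹) := by
        ring
      rcases hP with hP | hP <;> rcases hQ with hQ | hQ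
      · -- P ≤ 0, Q ≤ 0 : then ℓ₁ + ℓ₂ v ≤ 0, contradiction
        have p1 : 0 ≤ (-((ℓ₁ : ℝ) + ℓ₂)) * v :=
          mul_nonneg (neg_nonneg.mpr hP) hv0.le
        have p2 : 0 ≤ (-(ℓ₁ : ℝ)) * (1 - v) :=
          mul_nonneg (neg_nonneg.mpr hQ) (by linarith)
        linarith [p1, p2, ht0]
      · -- P ≤ 0, 1 ≤ Q : value ≤ B ≤ z - 1 < value
        have p1 : 0 ≤ (-((ℓ₁ : ℝ) + ℓ₂)) * (v * (z + w) + ξ⁻¹) :=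
          mul_nonneg (neg_nonneg.mpr hP) hA0
        have p2 : 0 ≤ ((ℓ₁ : ℝ) - 1) * (-((1 - v) * (z + w) - ξ⁻¹)) :=
          mul_nonneg (by linarith) (by linarith)
        linarith [p1, p2, hid, hy1, hBz]
      · -- 1 ≤ P, Q ≤ 0 : value ≥ A ≥ z + 1 > value
        have p1 : 0 ≤ ((ℓ₁ : ℝ) + ℓ₂ - 1) * (v * (z + w) + ξ⁻¹) :=
          mul_nonneg (by linarith) hA0
        have p2 : 0 ≤ (-(ℓ₁ : ℝ)) * (-((1 - v) * (z + w) - ξ⁻¹)) :=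
          mul_nonneg (neg_nonneg.mpr hQ) (by linarith)
        linarith [p1, p2, hid, hy2, hAz]
      · -- 1 ≤ P, 1 ≤ Q : then ℓ₁ + ℓ₂ v ≥ 1, contradiction
        have p1 : 0 ≤ ((ℓ₁ : ℝ) + ℓ₂ - 1) * v :=
          mul_nonneg (by linarith) hv0.le
        have p2 : 0 ≤ ((ℓ₁ : ℝ) - 1) * (1 - v) :=
          mul_nonneg (by linarith) (by linarith)
        linarith [p1, p2, ht1]
  have hset : {v ∈ Ioo (0 : ℝ) 1 | ∀ ℓ₁ ℓ₂ : ℤ, ℓ₁ • a₁ + ℓ₂ • a₂ v ∉ R} =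
      {v ∈ Ioo (0 : ℝ) 1 | max w z + 1 - ξ⁻¹ ≤ v * (z + w)} := by
    ext v
    simp only [mem_sep_iff]
    exact and_congr_right fun hv => key v hv
  rw [hset]
  rcases lt_trichotomy (z + w) 0 with hs | hs | hs
  · -- z + w < 0
    have hne : z + w ≠ 0 := ne_of_lt hs
    have hwz : w + z ≠ 0 := by rw [add_comm]; exact hne
    have habs : |w + z| = -(z + w) := by
      rw [abs_of_neg (by linarith : w + z < 0)]; ring
    have hmaxabs : max |w| |z| = -(min w z) := by
      have h1 : |w| ≤ -(min w z) := abs_le.mpr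
        ⟨by have := min_le_left w z; linarith, by have := min_le_right w z; linarith⟩
      have h2 : |z| ≤ -(min w z) := abs_le.mpr
        ⟨by have := min_le_right w z; linarith, by have := min_le_left w z; linarith⟩
      refine le_antisymm (max_le h1 h2) ?_
      rcases min_cases w z with ⟨h, _⟩ | ⟨h, _⟩
      · rw [h]; exact le_trans (neg_le_abs w) (le_max_left _ _)
      · rw [h]; exact le_trans (neg_le_abs z) (le_max_right _ _)
    have hmin' : min w z = w + z - max w z := by
      have := max_add_min w z; linarith
    have hΦ : π ^ 2 / 6 * Φ₀ ξ w z = Υ ((max w z + 1 - ξ⁻¹) / (z + w)) := by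
      rw [Φ₀, if_pos hwz, habs, hmaxabs, hmin']
      rw [show (1 + (ξ⁻¹ - -(w + z - max w z) - 1) / -(z + w))
          = (max w z + 1 - ξ⁻¹) / (z + w) from by
        rw [div_neg, ← sub_eq_add_neg, one_sub_div hne]
        congr 1
        ring]
      rw [← mul_assoc, show π ^ 2 / 6 * (6 / π ^ 2) = 1 from by
        field_simp, one_mul]
    rw [hΦ]
    have hseteq : {v ∈ Ioo (0 : ℝ) 1 | max w z + 1 - ξ⁻¹ ≤ v * (z + w)} =
        Ioo 0 1 ∩ Iic ((max w z + 1 - ξ⁻¹) / (z + w)) := by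
      ext v
      simp only [mem_sep_iff, mem_inter_iff, mem_Iic]
      exact and_congr_right fun _ => (le_div_iff_of_neg hs).symm
    rw [hseteq]
    set a := (max w z + 1 - ξ⁻¹) / (z + w) with hadef
    rcases le_or_gt 1 a with ha | ha
    · rw [inter_eq_left.mpr fun v hv => mem_Iic.mpr (le_trans (mem_Ioo.mp hv).2.le ha)]
      rw [Real.volume_Ioo, show Υ a = 1 from by
        simp only [Υ]; rw [if_neg (by linarith), if_neg (by linarith)]]
      norm_num
    · have hint : Ioo (0 : ℝ) 1 ∩ Iic a = Ioc 0 a := by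
        ext v
        simp only [mem_inter_iff, mem_Ioo, mem_Ioc, mem_Iic]
        constructor
        · rintro ⟨⟨h1, _⟩, h3⟩; exact ⟨h1, h3⟩
        · rintro ⟨h1, h3⟩; exact ⟨⟨h1, lt_of_le_of_lt h3 ha⟩, h3⟩
      rw [hint, Real.volume_Ioc]
      rcases le_or_gt a 0 with ha0 | ha0
      · rw [show Υ a = 0 from by simp only [Υ]; rw [if_pos ha0]]
        rw [ENNReal.ofReal_eq_zero.mpr (by linarith), ENNReal.ofReal_zero]
      · rw [show Υ a = a from by simp only [Υ]; rw [if_neg (by linarith), if_pos ha]]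
        rw [sub_zero]
  · -- z + w = 0
    have hwz : ¬ (w + z ≠ 0) := by
      simp only [ne_eq, not_not]; linarith
    have hmaxw : max w z = |w| := by
      have hzw : z = -w := by linarith
      rw [hzw]
      exact (abs_eq_max_neg (a := w)).symm
    rcases lt_or_ge ξ⁻¹ (1 + |w|) with hlt | hge
    · have hseteq : {v ∈ Ioo (0 : ℝ) 1 | max w z + 1 - ξ⁻¹ ≤ v * (z + w)} = (∅ : Set ℝ) := by
        ext v
        simp only [mem_sep_iff, mem_empty_iff_false, iff_false, not_and]
        intro _ h
        rw [hs, mul_zero, hmaxw] at h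
        linarith
      rw [hseteq, measure_empty]
      rw [show π ^ 2 / 6 * Φ₀ ξ w z = 0 from by
        rw [Φ₀, if_neg hwz, if_pos hlt, mul_zero], ENNReal.ofReal_zero]
    · have hseteq : {v ∈ Ioo (0 : ℝ) 1 | max w z + 1 - ξ⁻¹ ≤ v * (z + w)} = Ioo 0 1 := by
        ext v
        simp only [mem_sep_iff, and_iff_left_iff_imp]
        intro _
        rw [hs, mul_zero, hmaxw]
        linarith
      rw [hseteq, Real.volume_Ioo]
      rw [show π ^ 2 / 6 * Φ₀ ξ w z = 1 from by
        rw [Φ₀, if_neg hwz, if_neg (not_lt.mpr hge)]; field_simp]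
      norm_num
  · -- 0 < z + w
    have hne : z + w ≠ 0 := ne_of_gt hs
    have hwz : w + z ≠ 0 := by rw [add_comm]; exact hne
    have habs : |w + z| = z + w := by
      rw [abs_of_pos (by linarith : 0 < w + z)]; ring
    have hmaxabs : max |w| |z| = max w z := by
      have h1 : |w| ≤ max w z := abs_le.mpr
        ⟨by have := le_max_right w z; linarith, le_max_left _ _⟩
      have h2 : |z| ≤ max w z := abs_le.mpr
        ⟨by have := le_max_left w z; linarith, le_max_right _ _⟩
      exact le_antisymm (max_le h1 h2)
        (max_le (le_trans (le_abs_self w) (le_max_left _ _))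
          (le_trans (le_abs_self z) (le_max_right _ _)))
    have hΦ : π ^ 2 / 6 * Φ₀ ξ w z = Υ (1 - (max w z + 1 - ξ⁻¹) / (z + w)) := by
      rw [Φ₀, if_pos hwz, habs, hmaxabs]
      rw [show (1 + (ξ⁻¹ - max w z - 1) / (z + w))
          = 1 - (max w z + 1 - ξ⁻¹) / (z + w) from by ring]
      rw [← mul_assoc, show π ^ 2 / 6 * (6 / π ^ 2) = 1 from by
        field_simp, one_mul]
    rw [hΦ]
    have hseteq : {v ∈ Ioo (0 : ℝ) 1 | max w z + 1 - ξ⁻¹ ≤ v * (z + w)} =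
        Ioo 0 1 ∩ Ici ((max w z + 1 - ξ⁻¹) / (z + w)) := by
      ext v
      simp only [mem_sep_iff, mem_inter_iff, mem_Ici]
      exact and_congr_right fun _ => (div_le_iff₀ hs).symm
    rw [hseteq]
    set a := (max w z + 1 - ξ⁻¹) / (z + w) with hadef
    rcases le_or_gt a 0 with ha | ha
    · rw [inter_eq_left.mpr fun v hv => mem_Ici.mpr (le_trans ha (mem_Ioo.mp hv).1.le)]
      rw [Real.volume_Ioo, show Υ (1 - a) = 1 from by
        simp only [Υ]; rw [if_neg (by linarith), if_neg (by linarith)]]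
      norm_num
    · have hint : Ioo (0 : ℝ) 1 ∩ Ici a = Ico a 1 := by
        ext v
        simp only [mem_inter_iff, mem_Ioo, mem_Ico, mem_Ici]
        constructor
        · rintro ⟨⟨_, h2⟩, h3⟩; exact ⟨h3, h2⟩
        · rintro ⟨h3, h2⟩; exact ⟨⟨lt_of_lt_of_le ha h3, h2⟩, h3⟩
      rw [hint, Real.volume_Ico]
      rcases lt_or_ge a 1 with ha1 | ha1
      · rw [show Υ (1 - a) = 1 - a from by
          simp only [Υ]; rw [if_neg (by linarith), if_pos (by linarith)]]
      · rw [show Υ (1 - a) = 0 from by simp only [Υ]; rw [if_pos (by linarith)]]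
        rw [ENNReal.ofReal_eq_zero.mpr (by linarith), ENNReal.ofReal_zero]
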